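/- Let c be an even function on ℝ^d∖{0}, homogeneous of degree 0 and Lipschitz of order α ∈ (0,1] on the sphere, let ρ : ℝ^{d−1} → ℝ be rapidly decreasing, and let s ∈ (0,1). Then there exists C > 0 such that for all p ∈ ℝ with |p| ≥ 1, ∫_{|γ| ≤ |p|^s} |c(γ, p) − c(θ0)| |ρ(γ)| dγ ≤ C|p|^{−α(1−s)}. -/

import Mathlib

open MeasureTheory Filter

noncomputable section

/-- The point `(γ, p) ∈ ℝ^{m+1}` with `γ ∈ ℝ^m` and last coordinate `p`. -/
def app {m : ℕ} (γ : EuclideanSpace ℝ (Fin m)) (p : ℝ) :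
    EuclideanSpace ℝ (Fin (m + 1)) :=
  WithLp.toLp 2 (Fin.snoc (α := fun _ => ℝ) (WithLp.ofLp γ) p)

/-- The direction `θ₀ = (0, …, 0, 1) ∈ ℝ^{m+1}`. -/
def theta0 (m : ℕ) : EuclideanSpace ℝ (Fin (m + 1)) := app 0 1

/-- `g` is homogeneous of degree `0` on `ℝ^n ∖ {0}`. -/
def Homog0 {n : ℕ} (g : EuclideanSpace ℝ (Fin n) → ℝ) : Prop :=
  ∀ t : ℝ, 0 < t → ∀ ξ : EuclideanSpace ℝ (Fin n), ξ ≠ 0 → g (t • ξ) = g ξ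

/-- `g` is even. -/
def EvenFn {n : ℕ} (g : EuclideanSpace ℝ (Fin n) → ℝ) : Prop :=
  ∀ ξ : EuclideanSpace ℝ (Fin n), g (-ξ) = g ξ

/-- `g` is Lipschitz of order `α` on the unit sphere. -/
def LipSphere {n : ℕ} (g : EuclideanSpace ℝ (Fin n) → ℝ) (α : ℝ) : Prop :=
  ∃ L > (0 : ℝ), ∀ x y : EuclideanSpace ℝ (Fin n), ‖x‖ = 1 → ‖y‖ = 1 →
    |g x - g y| ≤ L * ‖x - y‖ ^ α

/-- `ρ` is rapidly decreasing. -/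
def RapidDecay {n : ℕ} (ρ : EuclideanSpace ℝ (Fin n) → ℝ) : Prop :=
  ∀ k : ℕ, ∃ C > (0 : ℝ), ∀ x : EuclideanSpace ℝ (Fin n),
    |ρ x| ≤ C * (1 + ‖x‖) ^ (-(k : ℝ))

lemma app_sub {m : ℕ} (γ γ' : EuclideanSpace ℝ (Fin m)) (p p' : ℝ) :
    app γ p - app γ' p' = app (γ - γ') (p - p') := by
  ext i
  refine Fin.lastCases ?_ (fun j => ?_) i <;>
    simp [app, PiLp.sub_apply, Fin.snoc_castSucc, Fin.snoc_last]

lemma neg_app {m : ℕ} (γ : EuclideanSpace ℝ (Fin m)) (p : ℝ) :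
    -app γ p = app (-γ) (-p) := by
  ext i
  refine Fin.lastCases ?_ (fun j => ?_) i <;>
    simp [app, PiLp.neg_apply, Fin.snoc_castSucc, Fin.snoc_last]

lemma smul_app {m : ℕ} (t : ℝ) (γ : EuclideanSpace ℝ (Fin m)) (p : ℝ) :
    t • app γ p = app (t • γ) (t * p) := by
  ext i
  refine Fin.lastCases ?_ (fun j => ?_) i <;>
    simp [app, PiLp.smul_apply, Fin.snoc_castSucc, Fin.snoc_last]

lemma norm_app_sq {m : ℕ} (γ : EuclideanSpace ℝ (Fin m)) (p : ℝ) :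
    ‖app γ p‖ ^ 2 = ‖γ‖ ^ 2 + p ^ 2 := by
  have h1 := EuclideanSpace.norm_eq (app γ p)
  have h2 := EuclideanSpace.norm_eq γ
  rw [h1, h2, Real.sq_sqrt (by positivity), Real.sq_sqrt (by positivity),
    Fin.sum_univ_castSucc]
  simp [app, Fin.snoc_castSucc, Fin.snoc_last, sq_abs]

lemma norm_app_zero {m : ℕ} (γ : EuclideanSpace ℝ (Fin m)) : ‖app γ 0‖ = ‖γ‖ := by
  have h := norm_app_sq γ 0
  have : ‖app γ 0‖ ^ 2 = ‖γ‖ ^ 2 := by simpa using h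
  nlinarith [norm_nonneg (app γ 0), norm_nonneg γ]

lemma norm_app_zero_left {m : ℕ} (p : ℝ) :
    ‖app (0 : EuclideanSpace ℝ (Fin m)) p‖ = |p| := by
  have h := norm_app_sq (0 : EuclideanSpace ℝ (Fin m)) p
  have : ‖app (0 : EuclideanSpace ℝ (Fin m)) p‖ ^ 2 = |p| ^ 2 := by simpa [sq_abs] using h
  nlinarith [norm_nonneg (app (0 : EuclideanSpace ℝ (Fin m)) p), abs_nonneg p]

lemma abs_le_norm_app {m : ℕ} (γ : EuclideanSpace ℝ (Fin m)) (p : ℝ) :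
    |p| ≤ ‖app γ p‖ := by
  have h := norm_app_sq γ p
  nlinarith [norm_nonneg (app γ p), abs_nonneg p, sq_abs p, sq_nonneg ‖γ‖]

lemma unit_est {E : Type*} [NormedAddCommGroup E] [NormedSpace ℝ E]
    (x y : E) (hx : x ≠ 0) :
    ‖‖x‖⁻¹ • x - ‖y‖⁻¹ • y‖ ≤ 2 * ‖x - y‖ / ‖x‖ := by
  have hx0 : (0:ℝ) < ‖x‖ := norm_pos_iff.mpr hx
  rcases eq_or_ne y 0 with rfl | hy
  · simp [norm_smul, abs_of_nonneg (le_of_lt (inv_pos.mpr hx0)),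
      inv_mul_cancel₀ hx0.ne']
    rw [mul_div_assoc, div_self hx0.ne']; norm_num
  have hy0 : (0:ℝ) < ‖y‖ := norm_pos_iff.mpr hy
  have key : ‖x‖⁻¹ • x - ‖y‖⁻¹ • y = ‖x‖⁻¹ • (x - y) + (‖x‖⁻¹ - ‖y‖⁻¹) • y := by
    module
  rw [key]
  have h1 : ‖‖x‖⁻¹ • (x - y)‖ = ‖x - y‖ / ‖x‖ := by
    rw [norm_smul, Real.norm_eq_abs, abs_of_nonneg (le_of_lt (inv_pos.mpr hx0))]
    ring
  have h2 : ‖(‖x‖⁻¹ - ‖y‖⁻¹) • y‖ ≤ ‖x - y‖ / ‖x‖ := by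
    rw [norm_smul, Real.norm_eq_abs]
    have he : |‖x‖⁻¹ - ‖y‖⁻¹| * ‖y‖ = |‖y‖ - ‖x‖| / ‖x‖ := by
      rw [← abs_of_pos hy0, ← abs_mul, ← abs_of_pos hx0, ← abs_div]
      congr 1
      field_simp
      simp only [abs_of_pos hx0, abs_of_pos hy0]
      ring
    rw [he]
    have habs : |‖y‖ - ‖x‖| ≤ ‖x - y‖ := by
      rw [abs_sub_comm]
      simpa [norm_sub_rev] using abs_norm_sub_norm_le x y
    gcongr
  calc ‖‖x‖⁻¹ • (x - y) + (‖x‖⁻¹ - ‖y‖⁻¹) • y‖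
      ≤ ‖‖x‖⁻¹ • (x - y)‖ + ‖(‖x‖⁻¹ - ‖y‖⁻¹) • y‖ := norm_add_le _ _
    _ ≤ ‖x - y‖ / ‖x‖ + ‖x - y‖ / ‖x‖ := by rw [h1]; linarith [h2]
    _ = 2 * ‖x - y‖ / ‖x‖ := by ring

lemma key_pos {m : ℕ} {α L : ℝ} (hα : 0 < α) (hL : 0 < L)
    {c : EuclideanSpace ℝ (Fin (m+1)) → ℝ} (hchom : Homog0 c)
    (hclip : ∀ x y : EuclideanSpace ℝ (Fin (m+1)), ‖x‖ = 1 → ‖y‖ = 1 →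
      |c x - c y| ≤ L * ‖x - y‖ ^ α)
    (γ : EuclideanSpace ℝ (Fin m)) (p : ℝ) (hp : 0 < p) :
    |c (app γ p) - c (theta0 m)| ≤ L * (2 * ‖γ‖ / p) ^ α := by
  set ξ := app γ p with hξdef
  have hξnorm : 0 < ‖ξ‖ :=
    lt_of_lt_of_le hp (by simpa [abs_of_pos hp] using abs_le_norm_app γ p)
  have hξ : ξ ≠ 0 := norm_pos_iff.mp hξnorm
  have hcξ : c (‖ξ‖⁻¹ • ξ) = c ξ := hchom _ (inv_pos.mpr hξnorm) ξ hξ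
  set η := app (0 : EuclideanSpace ℝ (Fin m)) p with hηdef
  have hηnorm : ‖η‖ = p := by rw [hηdef, norm_app_zero_left, abs_of_pos hp]
  have hη : η ≠ 0 := by
    intro h; rw [h, norm_zero] at hηnorm; exact hp.ne hηnorm
  have hθη : ‖η‖⁻¹ • η = theta0 m := by
    rw [hηnorm, hηdef, smul_app, smul_zero, inv_mul_cancel₀ hp.ne']
    rfl
  have hsub : ‖η - ξ‖ = ‖γ‖ := by
    rw [hηdef, hξdef, app_sub, sub_self, zero_sub, norm_app_zero, norm_neg]
  have hest : ‖theta0 m - ‖ξ‖⁻¹ • ξ‖ ≤ 2 * ‖γ‖ / p := by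
    rw [← hθη]
    calc ‖‖η‖⁻¹ • η - ‖ξ‖⁻¹ • ξ‖ ≤ 2 * ‖η - ξ‖ / ‖η‖ := unit_est η ξ hη
      _ = 2 * ‖γ‖ / p := by rw [hsub, hηnorm]
  have hunit : ‖‖ξ‖⁻¹ • ξ‖ = 1 := norm_smul_inv_norm hξ
  have hθnorm : ‖theta0 m‖ = 1 := by
    rw [theta0, norm_app_zero_left]; norm_num
  calc |c ξ - c (theta0 m)| = |c (‖ξ‖⁻¹ • ξ) - c (theta0 m)| := by rw [hcξ]
    _ ≤ L * ‖‖ξ‖⁻¹ • ξ - theta0 m‖ ^ α := hclip _ _ hunit hθnorm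
    _ ≤ L * (2 * ‖γ‖ / p) ^ α := by
        have h1 : ‖‖ξ‖⁻¹ • ξ - theta0 m‖ ≤ 2 * ‖γ‖ / p := by
          rw [norm_sub_rev]; exact hest
        exact mul_le_mul_of_nonneg_left
          (Real.rpow_le_rpow (norm_nonneg _) h1 hα.le) hL.le

lemma key_est {m : ℕ} {α L : ℝ} (hα : 0 < α) (hL : 0 < L)
    {c : EuclideanSpace ℝ (Fin (m+1)) → ℝ} (hceven : EvenFn c) (hchom : Homog0 c)
    (hclip : ∀ x y : EuclideanSpace ℝ (Fin (m+1)), ‖x‖ = 1 → ‖y‖ = 1 →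
      |c x - c y| ≤ L * ‖x - y‖ ^ α)
    (γ : EuclideanSpace ℝ (Fin m)) (p : ℝ) (hp : p ≠ 0) :
    |c (app γ p) - c (theta0 m)| ≤ L * (2 * ‖γ‖ / |p|) ^ α := by
  rcases hp.lt_or_gt with h | h
  · have hrw : c (app γ p) = c (app (-γ) (-p)) := by
      rw [← hceven (app (-γ) (-p)), neg_app, neg_neg, neg_neg]
    rw [hrw, abs_of_neg h]
    have := key_pos hα hL hchom hclip (-γ) (-p) (by linarith)
    simpa [norm_neg] using this
  · rw [abs_of_pos h]
    exact key_pos hα hL hchom hclip γ p h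

theorem statement15 (m : ℕ) (hm : 1 ≤ m) (α : ℝ) (hα : 0 < α) (hα1 : α ≤ 1)
    (c : EuclideanSpace ℝ (Fin (m + 1)) → ℝ)
    (hceven : EvenFn c) (hchom : Homog0 c) (hclip : LipSphere c α)
    (ρ : EuclideanSpace ℝ (Fin m) → ℝ) (hρmeas : Measurable ρ)
    (hρ : RapidDecay ρ)
    (s : ℝ) (hs : s ∈ Set.Ioo (0 : ℝ) 1) :
    ∃ C > (0 : ℝ), ∀ p : ℝ, 1 ≤ |p| →
      (∫ γ in {γ : EuclideanSpace ℝ (Fin m) | ‖γ‖ ≤ |p| ^ s},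
          |c (app γ p) - c (theta0 m)| * |ρ γ|) ≤ C * |p| ^ (-α * (1 - s)) := by
  obtain ⟨L, hL, hlip⟩ := hclip
  obtain ⟨C0, hC0, hρbound⟩ := hρ (m + 2)
  set I : ℝ := ∫ γ : EuclideanSpace ℝ (Fin m), (1 + ‖γ‖) ^ (-((m:ℝ) + 1)) with hIdef
  have hint : Integrable
      (fun γ : EuclideanSpace ℝ (Fin m) => (1 + ‖γ‖) ^ (-((m:ℝ) + 1))) := by
    apply integrable_one_add_norm
    rw [finrank_euclideanSpace_fin]
    linarith
  have hI0 : 0 ≤ I :=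
    integral_nonneg fun γ => Real.rpow_nonneg (by positivity) _
  refine ⟨L * 2 ^ α * C0 * (I + 1), by positivity, fun p hp => ?_⟩
  have hp0 : p ≠ 0 := by
    intro h; rw [h, abs_zero] at hp; linarith
  set K : ℝ := L * 2 ^ α * C0 * |p| ^ (-α) with hKdef
  have hK0 : 0 ≤ K :=
    mul_nonneg (mul_nonneg (mul_nonneg hL.le (Real.rpow_nonneg (by norm_num) _))
      hC0.le) (Real.rpow_nonneg (abs_nonneg p) _)
  have pointwise : ∀ γ : EuclideanSpace ℝ (Fin m),
      |c (app γ p) - c (theta0 m)| * |ρ γ| ≤ K * (1 + ‖γ‖) ^ (-((m:ℝ) + 1)) := by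
    intro γ
    have hbase : (0:ℝ) < 1 + ‖γ‖ := by positivity
    have h1 := key_est hα hL hceven hchom hlip γ p hp0
    have h2 := hρbound γ
    have hsplit : (2 * ‖γ‖ / |p|) ^ α = 2 ^ α * ‖γ‖ ^ α * |p| ^ (-α) := by
      rw [div_eq_mul_inv,
        Real.mul_rpow (by positivity) (by positivity),
        Real.mul_rpow (by norm_num) (norm_nonneg _),
        Real.inv_rpow (abs_nonneg p), ← Real.rpow_neg (abs_nonneg p)]
    have h3 : ‖γ‖ ^ α ≤ 1 + ‖γ‖ := by
      calc ‖γ‖ ^ α ≤ (1 + ‖γ‖) ^ α :=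
            Real.rpow_le_rpow (norm_nonneg _) (by linarith [norm_nonneg γ]) hα.le
        _ ≤ (1 + ‖γ‖) ^ (1:ℝ) :=
            Real.rpow_le_rpow_of_exponent_le (by linarith [norm_nonneg γ]) hα1
        _ = 1 + ‖γ‖ := Real.rpow_one _
    have h4 : (1 + ‖γ‖) * (1 + ‖γ‖) ^ (-(((m+2 : ℕ)):ℝ)) = (1 + ‖γ‖) ^ (-((m:ℝ) + 1)) := by
      rw [show -((m:ℝ) + 1) = 1 + (-(((m+2 : ℕ)):ℝ)) by push_cast; ring,
        Real.rpow_add hbase, Real.rpow_one]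
    calc |c (app γ p) - c (theta0 m)| * |ρ γ|
        ≤ (L * (2 * ‖γ‖ / |p|) ^ α) * (C0 * (1 + ‖γ‖) ^ (-(((m+2 : ℕ)):ℝ))) :=
          mul_le_mul h1 h2 (abs_nonneg _)
            (mul_nonneg hL.le (Real.rpow_nonneg (by positivity) _))
      _ = (L * 2 ^ α * C0 * |p| ^ (-α)) *
            (‖γ‖ ^ α * (1 + ‖γ‖) ^ (-(((m+2 : ℕ)):ℝ))) := by
          rw [hsplit]; ring
      _ ≤ (L * 2 ^ α * C0 * |p| ^ (-α)) *
            ((1 + ‖γ‖) * (1 + ‖γ‖) ^ (-(((m+2 : ℕ)):ℝ))) := by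
          refine mul_le_mul_of_nonneg_left ?_ hK0
          exact mul_le_mul_of_nonneg_right h3 (Real.rpow_nonneg hbase.le _)
      _ = K * (1 + ‖γ‖) ^ (-((m:ℝ) + 1)) := by rw [h4]
  have hpexp : |p| ^ (-α) ≤ |p| ^ (-α * (1 - s)) := by
    apply Real.rpow_le_rpow_of_exponent_le hp
    nlinarith [hs.1, hs.2]
  calc (∫ γ in {γ : EuclideanSpace ℝ (Fin m) | ‖γ‖ ≤ |p| ^ s},
          |c (app γ p) - c (theta0 m)| * |ρ γ|)
      ≤ ∫ γ in {γ : EuclideanSpace ℝ (Fin m) | ‖γ‖ ≤ |p| ^ s},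
          K * (1 + ‖γ‖) ^ (-((m:ℝ) + 1)) := by
        refine integral_mono_of_nonneg
          (Eventually.of_forall fun γ => by positivity)
          ((hint.const_mul K).restrict)
          (Eventually.of_forall fun γ => pointwise γ)
    _ ≤ ∫ γ : EuclideanSpace ℝ (Fin m), K * (1 + ‖γ‖) ^ (-((m:ℝ) + 1)) :=
        setIntegral_le_integral (hint.const_mul K)
          (Eventually.of_forall fun γ =>
            mul_nonneg hK0 (Real.rpow_nonneg (by positivity) _))
    _ = K * I := by rw [hIdef, integral_const_mul]
    _ ≤ L * 2 ^ α * C0 * (I + 1) * |p| ^ (-α * (1 - s)) := by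
        calc K * I = (L * 2 ^ α * C0) * (|p| ^ (-α) * I) := by rw [hKdef]; ring
          _ ≤ (L * 2 ^ α * C0) * (|p| ^ (-α * (1 - s)) * (I + 1)) := by
              refine mul_le_mul_of_nonneg_left ?_ (by positivity)
              exact mul_le_mul hpexp (by linarith) hI0
                (Real.rpow_nonneg (abs_nonneg p) _)
          _ = L * 2 ^ α * C0 * (I + 1) * |p| ^ (-α * (1 - s)) := by ring
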